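/- arXiv:2208.12130 — 2 statements merged into one kernel-verified Lean document; each statement's English description precedes it below -/
import Mathlib

section
/- Let V be a finite nonempty set with |V| = n, let Γ : V → ℕ, and let μ := (Σ_{v∈V} Γ(v))/n. If min_{v∈V} Γ(v) ≥ μ − 1, then the set S'(Γ) := {v ∈ V : Γ(v) ≤ ⌈μ⌋} satisfies |S'(Γ)| ≥ n/3. -/
/-- Rounding a real number to the nearest integer, ties rounded up: `⌈x⌋ := ⌈x - 1/2⌉`. -/
noncomputable def roundNear (x : ℝ) : ℤ := ⌈x - 1 / 2⌉

/-- If every vertex of a finite nonempty set `V` carries at least `μ − 1` tokens, where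
`μ = (Σ_v Γ(v))/|V|` is the average load, then at least a third of the vertices carry at most
`⌈μ⌋` tokens. -/
theorem many_low_vertices {V : Type} [Fintype V] [Nonempty V] (Γ : V → ℕ)
    (h : ∀ v : V, (∑ u : V, (Γ u : ℝ)) / (Fintype.card V : ℝ) - 1 ≤ (Γ v : ℝ)) :
    (Fintype.card V : ℝ) / 3 ≤
      ((Finset.univ.filter fun v : V =>
        (Γ v : ℤ) ≤ roundNear ((∑ u : V, (Γ u : ℝ)) / (Fintype.card V : ℝ))).card : ℝ) := by
  set n : ℕ := Fintype.card V with hn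
  set μ : ℝ := (∑ u : V, (Γ u : ℝ)) / (n : ℝ) with hμ
  have hn0 : 0 < (n : ℝ) := by
    have := Fintype.card_pos (α := V); exact_mod_cast this
  set S : Finset V := Finset.univ.filter fun v : V => (Γ v : ℤ) ≤ roundNear μ with hS
  set T : Finset V := Finset.univ.filter fun v : V => ¬ (Γ v : ℤ) ≤ roundNear μ with hT
  have hsum : (∑ u : V, (Γ u : ℝ)) = (n : ℝ) * μ := by
    rw [hμ]; field_simp
  have hcard : S.card + T.card = n := by
    rw [hS, hT]; exact Finset.card_filter_add_card_filter_not _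
  have hround : μ - 1 / 2 ≤ (roundNear μ : ℝ) := Int.le_ceil _
  have hSB : (S.card : ℝ) * (μ - 1) ≤ ∑ v ∈ S, (Γ v : ℝ) := by
    calc (S.card : ℝ) * (μ - 1) = ∑ _v ∈ S, (μ - 1) := by
          rw [Finset.sum_const, nsmul_eq_mul]
      _ ≤ ∑ v ∈ S, (Γ v : ℝ) := Finset.sum_le_sum fun v _ => h v
  have hTB : (T.card : ℝ) * (μ + 1 / 2) ≤ ∑ v ∈ T, (Γ v : ℝ) := by
    calc (T.card : ℝ) * (μ + 1 / 2) = ∑ _v ∈ T, (μ + 1 / 2) := by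
          rw [Finset.sum_const, nsmul_eq_mul]
      _ ≤ ∑ v ∈ T, (Γ v : ℝ) := by
          apply Finset.sum_le_sum
          intro v hv
          have : ¬ (Γ v : ℤ) ≤ roundNear μ := (Finset.mem_filter.mp hv).2
          have h1 : roundNear μ + 1 ≤ (Γ v : ℤ) := by omega
          have h2 : ((roundNear μ : ℝ)) + 1 ≤ (Γ v : ℝ) := by exact_mod_cast h1
          linarith
  have hsplit : (∑ v ∈ S, (Γ v : ℝ)) + (∑ v ∈ T, (Γ v : ℝ)) = ∑ u : V, (Γ u : ℝ) := by
    rw [hS, hT]; exact Finset.sum_filter_add_sum_filter_not _ _ _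
  have hcardR : (S.card : ℝ) + (T.card : ℝ) = (n : ℝ) := by exact_mod_cast hcard
  have hmul : (S.card : ℝ) * μ + (T.card : ℝ) * μ = (n : ℝ) * μ := by
    rw [← add_mul, hcardR]
  linarith [hSB, hTB, hsplit, hsum, hcardR, hmul]
end

section
/- Let G = (V, E) be a simple undirected graph and let v ∈ V be a vertex with deg(v) ≥ 1. Then ∏_{w ∈ N(v)} (1 − 1/(2·max{deg(w), deg(v)})) ≥ 1/2. -/
/-- For any vertex `v` of positive degree in a simple graph `G`,
`∏_{w ∈ N(v)} (1 − 1/(2·max{deg w, deg v})) ≥ 1/2`. -/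
theorem neighbor_product_ge_half {V : Type} [Fintype V] (G : SimpleGraph V)
    [DecidableRel G.Adj] (v : V) (hv : 1 ≤ G.degree v) :
    (1 : ℝ) / 2 ≤
      ∏ w ∈ G.neighborFinset v,
        (1 - 1 / (2 * (max (G.degree w) (G.degree v) : ℝ))) := by
  set d : ℕ := G.degree v with hd
  have hdpos : (0 : ℝ) < d := by exact_mod_cast hv
  have hfac : (0 : ℝ) < 1 - 1 / (2 * d) := by
    rw [sub_pos, div_lt_one (by positivity)]
    nlinarith [hdpos, (by exact_mod_cast hv : (1:ℝ) ≤ d)]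
  have hstep : ∀ w ∈ G.neighborFinset v,
      (1 : ℝ) - 1 / (2 * d) ≤ 1 - 1 / (2 * (max (G.degree w) d : ℝ)) := by
    intro w _
    have hmax : (d : ℝ) ≤ (max (G.degree w) d : ℕ) := by
      exact_mod_cast le_max_right (G.degree w) d
    have : (1 : ℝ) / (2 * (max (G.degree w) d : ℕ)) ≤ 1 / (2 * d) := by
      apply one_div_le_one_div_of_le (by positivity)
      linarith
    rw [Nat.cast_max] at this
    linarith
  calc (1 : ℝ) / 2 ≤ ((1 : ℝ) - 1 / (2 * d)) ^ d := by
        have := one_add_mul_le_pow (a := -(1 / (2 * (d : ℝ)))) (by nlinarith [hfac]) d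
        have h2 : (1 : ℝ) + d * -(1 / (2 * d)) = 1 / 2 := by
          field_simp
          ring
        rw [← sub_eq_add_neg] at this
        rw [h2] at this
        exact this
    _ ≤ ∏ w ∈ G.neighborFinset v, (1 - 1 / (2 * (max (G.degree w) (G.degree v) : ℝ))) := by
        rw [← G.card_neighborFinset_eq_degree v] at hd ⊢
        rw [hd, ← Finset.prod_const]
        exact Finset.prod_le_prod (fun w _ => le_of_lt hfac) hstep
end
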